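/- Let G be a finite abelian group with Davenport constant D, let x = (x_1, ..., x_m) ∈ G^m and w = (w_1, ..., w_m) ∈ ℤ^m. For any two subsets A, B ⊆ [1, m] with |B| ≥ |A|, there exist a subset R ⊆ A with |R| ≥ |A| - D + 1 and an injection g: R → B such that (R, g) is D-shellable; in particular ∑_{i ∈ R} w_i · x_{g(i)} = 0. -/

import Mathlib

/-- `D` is the Davenport constant of `G`: every sequence of `D` elements has a
nonempty zero-sum subsequence, and some sequence of `D - 1` elements has none. -/
def IsDavenport (G : Type*) [AddCommGroup G] [Fintype G] (D : ℕ) : Prop :=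
  (∀ x : Fin D → G, ∃ I : Finset (Fin D), I.Nonempty ∧ ∑ i ∈ I, x i = 0) ∧
  (∃ x : Fin (D - 1) → G, ∀ I : Finset (Fin (D - 1)), I.Nonempty → ∑ i ∈ I, x i ≠ 0)

/-- `(I, f)` is `k`-shellable: `f` is injective on `I` and `I` admits a partition into
(nonempty) blocks of size at most `k`, each with `∑ i ∈ B, w i • x (f i) = 0`. -/
def Shellable {G : Type*} [AddCommGroup G] {m : ℕ} (w : Fin m → ℤ) (x : Fin m → G)
    (k : ℕ) (I : Finset (Fin m)) (f : Fin m → Fin m) : Prop :=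
  Set.InjOn f I ∧ ∃ P : Finpartition I, ∀ B ∈ P.parts, B.card ≤ k ∧ ∑ i ∈ B, w i • x (f i) = 0

lemma sum_eq_sum_parts {α M : Type*} [DecidableEq α] [AddCommMonoid M]
    {R : Finset α} (P : Finpartition R) (f : α → M) :
    ∑ i ∈ R, f i = ∑ B ∈ P.parts, ∑ i ∈ B, f i := by
  have hR : P.parts.biUnion id = R := by
    rw [← Finset.sup_eq_biUnion, P.sup_parts]
  calc ∑ i ∈ R, f i = ∑ i ∈ P.parts.biUnion id, f i :=
        (Finset.sum_congr hR fun _ _ => rfl).symm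
    _ = ∑ B ∈ P.parts, ∑ i ∈ id B, f i :=
        Finset.sum_biUnion (Finset.supIndep_iff_pairwiseDisjoint.mp P.supIndep)
    _ = ∑ B ∈ P.parts, ∑ i ∈ B, f i := rfl

lemma aux_main {G : Type*} [AddCommGroup G] {m D : ℕ}
    (hD1 : ∀ y : Fin D → G, ∃ I : Finset (Fin D), I.Nonempty ∧ ∑ i ∈ I, y i = 0)
    (x : Fin m → G) (w : Fin m → ℤ) (g : Fin m → Fin m) (A : Finset (Fin m)) :
    ∃ R : Finset (Fin m), R ⊆ A ∧ A.card + 1 ≤ R.card + D ∧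
      ∃ P : Finpartition R, ∀ B ∈ P.parts, B.card ≤ D ∧ ∑ i ∈ B, w i • x (g i) = 0 := by
  induction A using Finset.strongInductionOn with
  | _ A ih =>
  by_cases hcard : A.card < D
  · refine ⟨∅, Finset.empty_subset _, by omega,
      (Finpartition.empty _).copy Finset.bot_eq_empty, ?_⟩
    intro B hB
    simp [Finpartition.empty, Finpartition.copy] at hB
  · push_neg at hcard
    obtain ⟨T, hTA, hT⟩ := Finset.exists_subset_card_eq hcard
    set e := T.orderIsoOfFin hT with he
    obtain ⟨I, hIne, hIsum⟩ := hD1 (fun j => w (e j) • x (g (e j)))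
    set S : Finset (Fin m) := I.image (fun j => (e j : Fin m)) with hS
    have hinj : Function.Injective (fun j : Fin D => (e j : Fin m)) := by
      intro a b hab
      exact e.injective (Subtype.ext hab)
    have hSne : S.Nonempty := hIne.image _
    have hST : S ⊆ T := by
      intro i hi
      simp only [hS, Finset.mem_image] at hi
      obtain ⟨j, _, rfl⟩ := hi
      exact (e j).2
    have hSA : S ⊆ A := hST.trans hTA
    have hScard : S.card ≤ D := by
      rw [hS, Finset.card_image_of_injective _ hinj]
      exact (Finset.card_le_univ I).trans (by simp)
    have hSsum : ∑ i ∈ S, w i • x (g i) = 0 := by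
      rw [hS, Finset.sum_image (fun a _ b _ h => hinj h)]
      exact hIsum
    have hss : A \ S ⊂ A := Finset.sdiff_ssubset hSA hSne
    obtain ⟨R', hR'sub, hR'card, P', hP'⟩ := ih _ hss
    have hdisj : Disjoint S R' :=
      ((Finset.sdiff_disjoint.mono_left hR'sub)).symm
    have hSnotin : ∀ B ∈ P'.parts, B ≠ S → Disjoint S B := fun B hB _ =>
      hdisj.mono_right (P'.le hB)
    refine ⟨S ∪ R', Finset.union_subset hSA (hR'sub.trans Finset.sdiff_subset), ?_, ?_⟩
    · have h1 : (A \ S).card + S.card = A.card := by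
        rw [Finset.card_sdiff_add_card, Finset.union_eq_left.mpr hSA]
      have h2 : (S ∪ R').card = S.card + R'.card := Finset.card_union_of_disjoint hdisj
      omega
    · refine ⟨⟨insert S P'.parts, ?_, ?_, ?_⟩, ?_⟩
      · rw [Finset.supIndep_iff_pairwiseDisjoint, Finset.coe_insert]
        exact (Finset.supIndep_iff_pairwiseDisjoint.mp P'.supIndep).insert
          (fun B hB hne => hSnotin B hB (fun h => hne h.symm))
      · rw [Finset.sup_insert, P'.sup_parts]
        rfl
      · simp only [Finset.mem_insert, not_or]
        exact ⟨fun h => hSne.ne_empty h.symm, P'.bot_notMem⟩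
      · intro B hB
        simp only [Finset.mem_insert] at hB
        rcases hB with rfl | hB
        · exact ⟨hScard, hSsum⟩
        · exact hP' B hB

theorem stmt_7 {G : Type*} [AddCommGroup G] [Fintype G] (D m : ℕ)
    (hD : IsDavenport G D) (x : Fin m → G) (w : Fin m → ℤ)
    (A B : Finset (Fin m)) (hAB : A.card ≤ B.card) :
    ∃ (R : Finset (Fin m)) (g : Fin m → Fin m),
      R ⊆ A ∧ A.card + 1 ≤ R.card + D ∧ (∀ i ∈ R, g i ∈ B) ∧
      Shellable w x D R g ∧ ∑ i ∈ R, w i • x (g i) = 0 := by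
  classical
  obtain ⟨f⟩ : Nonempty (↥A ↪ ↥B) :=
    Function.Embedding.nonempty_of_card_le (by simpa using hAB)
  obtain ⟨g, hginj, hgB⟩ :
      ∃ g : Fin m → Fin m, Set.InjOn g ↑A ∧ ∀ i ∈ A, g i ∈ B := by
    refine ⟨fun i => if h : i ∈ A then (f ⟨i, h⟩ : Fin m) else i, ?_, ?_⟩
    · intro i hi j hj hij
      simp only [Finset.mem_coe] at hi hj
      simp only [dif_pos hi, dif_pos hj] at hij
      exact congrArg Subtype.val (f.injective (Subtype.ext hij))
    · intro i hi
      simp only [dif_pos hi]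
      exact (f ⟨i, hi⟩).2
  obtain ⟨R, hRA, hRcard, P, hP⟩ := aux_main hD.1 x w g A
  refine ⟨R, g, hRA, hRcard, fun i hi => hgB i (hRA hi),
    ⟨hginj.mono (by exact_mod_cast hRA), P, hP⟩, ?_⟩
  rw [sum_eq_sum_parts P]
  exact Finset.sum_eq_zero fun B hB => (hP B hB).2
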